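/- For all 0 ≤ a ≤ n, the associated Stirling numbers of the second kind satisfy S_2(n,a) = Σ_{c=0}^{a} (−1)^c C(n,c) S(n−c, a−c), where S(m,k) is the ordinary Stirling number of the second kind. -/

import Mathlib

open Finset


/-- `S2 n a` is the number of partitions of an `n`-element set into `a` blocks,
each block of cardinality at least 2 (associated Stirling numbers of the second kind). -/
noncomputable def S2 (n a : ℕ) : ℕ :=
  Set.ncard {P : Finset (Finset (Fin n)) |
    P.card = a ∧ (∀ B ∈ P, 2 ≤ B.card) ∧ ∀ x : Fin n, ∃! B, B ∈ P ∧ x ∈ B}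

/-- `S n a` is the ordinary Stirling number of the second kind: the number of
partitions of an `n`-element set into `a` nonempty blocks. -/
noncomputable def S (n a : ℕ) : ℕ :=
  Set.ncard {P : Finset (Finset (Fin n)) |
    P.card = a ∧ (∀ B ∈ P, 1 ≤ B.card) ∧ ∀ x : Fin n, ∃! B, B ∈ P ∧ x ∈ B}

/-- Partitions of `α` into `a` blocks, each of size at least `k`. -/
def partSetK (α : Type*) (k a : ℕ) : Set (Finset (Finset α)) :=
  {P | P.card = a ∧ (∀ B ∈ P, k ≤ B.card) ∧ ∀ x : α, ∃! B, B ∈ P ∧ x ∈ B}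

lemma partSetK_disjoint {α : Type*} {P : Finset (Finset α)}
    (hP : ∀ x : α, ∃! B, B ∈ P ∧ x ∈ B) {B B' : Finset α}
    (hB : B ∈ P) (hB' : B' ∈ P) (hne : B ≠ B') : Disjoint B B' := by
  rw [Finset.disjoint_left]
  intro x hx hx'
  obtain ⟨C, -, hC⟩ := hP x
  exact hne ((hC B ⟨hB, hx⟩).trans (hC B' ⟨hB', hx'⟩).symm)

lemma mapsTo_aux {α β : Type*} [DecidableEq α] [DecidableEq β] (e : α ≃ β) (k a : ℕ) :
    ∀ P ∈ partSetK α k a,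
      (P.image fun B => B.image e) ∈ partSetK β k a := by
  classical
  rintro P ⟨hcard, hsize, hcover⟩
  refine ⟨?_, ?_, ?_⟩
  · rw [Finset.card_image_of_injective _ (Finset.image_injective e.injective), hcard]
  · intro B hB
    simp only [Finset.mem_image] at hB
    obtain ⟨C, hC, rfl⟩ := hB
    rw [Finset.card_image_of_injective _ e.injective]
    exact hsize C hC
  · intro y
    obtain ⟨B, ⟨hBP, hxB⟩, huniq⟩ := hcover (e.symm y)
    refine ⟨B.image e, ⟨Finset.mem_image_of_mem _ hBP, ?_⟩, ?_⟩
    · simpa using Finset.mem_image_of_mem e hxB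
    · rintro C ⟨hCP, hyC⟩
      simp only [Finset.mem_image] at hCP
      obtain ⟨D, hD, rfl⟩ := hCP
      have hyD : e.symm y ∈ D := by
        simp only [Finset.mem_image] at hyC
        obtain ⟨d, hd, hdy⟩ := hyC
        simpa [← hdy] using hd
      rw [huniq D ⟨hD, hyD⟩]

lemma ncard_partSetK_congr {α β : Type*} (e : α ≃ β) (k a : ℕ) :
    (partSetK α k a).ncard = (partSetK β k a).ncard := by
  classical
  have hinj : Function.Injective
      (fun P : Finset (Finset α) => P.image fun B => B.image e) :=
    Finset.image_injective (Finset.image_injective e.injective)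
  have himg : (fun P : Finset (Finset α) => P.image fun B => B.image e) '' partSetK α k a
      = partSetK β k a := by
    apply Set.Subset.antisymm
    · rintro _ ⟨P, hP, rfl⟩
      exact mapsTo_aux e k a P hP
    · intro Q hQ
      refine ⟨Q.image fun B => B.image e.symm, mapsTo_aux e.symm k a Q hQ, ?_⟩
      ext B
      simp only [Finset.mem_image]
      constructor
      · rintro ⟨C, ⟨D, hD, rfl⟩, rfl⟩
        simpa [Finset.image_image, Function.comp] using hD
      · intro hB
        exact ⟨B.image e.symm, ⟨B, hB, rfl⟩, by simp [Finset.image_image, Function.comp]⟩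
  rw [← himg, Set.ncard_image_of_injective _ hinj]

lemma S_eq_ncard (m a : ℕ) : S m a = (partSetK (Fin m) 1 a).ncard := rfl

lemma S2_eq_ncard (m a : ℕ) : S2 m a = (partSetK (Fin m) 2 a).ncard := rfl

lemma ncard_partSetK_fintype (α : Type*) [Fintype α] (k a : ℕ) :
    (partSetK α k a).ncard = (partSetK (Fin (Fintype.card α)) k a).ncard :=
  ncard_partSetK_congr (Fintype.equivFin α) k a

/-- Partitions of the subset `s` of `α` into `a` nonempty blocks. -/
def partOn {α : Type*} (s : Finset α) (a : ℕ) : Set (Finset (Finset α)) :=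
  {P | P.card = a ∧ (∀ B ∈ P, 1 ≤ B.card) ∧ (∀ B ∈ P, B ⊆ s) ∧
    ∀ x ∈ s, ∃! B, B ∈ P ∧ x ∈ B}

lemma ncard_partOn {α : Type*} [DecidableEq α] (s : Finset α) (a : ℕ) :
    (partOn s a).ncard = S s.card a := by
  classical
  have hinj : Function.Injective
      (fun Q : Finset (Finset {x // x ∈ s}) => Q.image fun B => B.image Subtype.val) :=
    Finset.image_injective (Finset.image_injective Subtype.val_injective)
  have himg : (fun Q : Finset (Finset {x // x ∈ s}) => Q.image fun B => B.image Subtype.val) ''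
      partSetK {x // x ∈ s} 1 a = partOn s a := by
    apply Set.Subset.antisymm
    · rintro _ ⟨Q, ⟨hcard, hsize, hcover⟩, rfl⟩
      refine ⟨?_, ?_, ?_, ?_⟩
      · rw [Finset.card_image_of_injective _ (Finset.image_injective Subtype.val_injective),
          hcard]
      · intro B hB
        simp only [Finset.mem_image] at hB
        obtain ⟨C, hC, rfl⟩ := hB
        rw [Finset.card_image_of_injective _ Subtype.val_injective]
        exact hsize C hC
      · intro B hB
        simp only [Finset.mem_image] at hB
        obtain ⟨C, hC, rfl⟩ := hB
        intro x hx
        simp only [Finset.mem_image] at hx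
        obtain ⟨⟨y, hy⟩, -, rfl⟩ := hx
        exact hy
      · intro x hx
        obtain ⟨B, ⟨hBQ, hxB⟩, hu⟩ := hcover ⟨x, hx⟩
        refine ⟨B.image Subtype.val, ⟨Finset.mem_image_of_mem _ hBQ,
          Finset.mem_image_of_mem _ hxB⟩, ?_⟩
        rintro C ⟨hCQ, hxC⟩
        simp only [Finset.mem_image] at hCQ
        obtain ⟨D, hD, rfl⟩ := hCQ
        have hxD : (⟨x, hx⟩ : {x // x ∈ s}) ∈ D := by
          simp only [Finset.mem_image] at hxC
          obtain ⟨d, hd, hdx⟩ := hxC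
          have : d = ⟨x, hx⟩ := Subtype.ext hdx
          rwa [← this]
        rw [hu D ⟨hD, hxD⟩]
    · rintro P ⟨hcard, hsize, hsub, hcover⟩
      have key : ∀ B ∈ P, (B.subtype (· ∈ s)).image Subtype.val = B := by
        intro B hB
        ext x
        simp only [Finset.mem_image, Finset.mem_subtype]
        constructor
        · rintro ⟨⟨y, hys⟩, hyB, rfl⟩
          exact hyB
        · intro hx
          exact ⟨⟨x, hsub B hB hx⟩, hx, rfl⟩
      have hQinj : Set.InjOn (fun B : Finset α => B.subtype (· ∈ s)) P := by
        intro B hB B' hB' hEq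
        rw [← key B hB, ← key B' hB']
        exact congrArg _ hEq
      refine ⟨P.image fun B => B.subtype (· ∈ s), ⟨?_, ?_, ?_⟩, ?_⟩
      · rw [Finset.card_image_of_injOn hQinj, hcard]
      · intro B hB
        simp only [Finset.mem_image] at hB
        obtain ⟨C, hC, rfl⟩ := hB
        obtain ⟨x, hx⟩ := Finset.card_pos.mp (hsize C hC)
        have : (⟨x, hsub C hC hx⟩ : {x // x ∈ s}) ∈ C.subtype (· ∈ s) := by
          simp [Finset.mem_subtype, hx]
        exact Finset.card_pos.mpr ⟨_, this⟩
      · intro x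
        obtain ⟨B, ⟨hBP, hxB⟩, hu⟩ := hcover x.1 x.2
        refine ⟨B.subtype (· ∈ s), ⟨Finset.mem_image_of_mem _ hBP, ?_⟩, ?_⟩
        · simp [Finset.mem_subtype, hxB]
        · rintro C ⟨hCQ, hxC⟩
          simp only [Finset.mem_image] at hCQ
          obtain ⟨D, hD, rfl⟩ := hCQ
          simp only [Finset.mem_subtype] at hxC
          rw [hu D ⟨hD, hxC⟩]
      · simp only [Finset.image_image]
        rw [show ((fun B : Finset {x // x ∈ s} => B.image Subtype.val) ∘
            fun B : Finset α => B.subtype (· ∈ s)) =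
            (fun B : Finset α => (B.subtype (· ∈ s)).image Subtype.val) from rfl]
        rw [Finset.image_congr fun B hB => key B hB]
        simp
  rw [← himg, Set.ncard_image_of_injective _ hinj, S_eq_ncard,
    ncard_partSetK_fintype, Fintype.card_coe]

noncomputable def partFin (n a : ℕ) : Finset (Finset (Finset (Fin n))) :=
  (Set.toFinite (partSetK (Fin n) 1 a)).toFinset

lemma mem_partFin {n a : ℕ} {P : Finset (Finset (Fin n))} :
    P ∈ partFin n a ↔ P ∈ partSetK (Fin n) 1 a := Set.Finite.mem_toFinset _

lemma card_partFin (n a : ℕ) : (partFin n a).card = S n a := by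
  rw [S_eq_ncard]
  exact (Set.ncard_eq_toFinset_card _ _).symm

noncomputable def partOnFin {n : ℕ} (s : Finset (Fin n)) (m : ℕ) :
    Finset (Finset (Finset (Fin n))) :=
  (Set.toFinite (partOn s m)).toFinset

lemma mem_partOnFin {n m : ℕ} {s : Finset (Fin n)} {P : Finset (Finset (Fin n))} :
    P ∈ partOnFin s m ↔ P ∈ partOn s m := Set.Finite.mem_toFinset _

lemma card_partOnFin {n : ℕ} (s : Finset (Fin n)) (m : ℕ) :
    (partOnFin s m).card = S s.card m := by
  rw [← ncard_partOn]
  exact (Set.ncard_eq_toFinset_card _ _).symm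

lemma count_pairs (n a c : ℕ) (hc : c ≤ a) :
    ∑ P ∈ partFin n a, ((P.filter fun B => B.card = 1).powersetCard c).card
      = n.choose c * S (n - c) (a - c) := by
  classical
  have hbij :
      ((partFin n a).sigma fun P => (P.filter fun B => B.card = 1).powersetCard c).card =
      ((Finset.univ.powersetCard c : Finset (Finset (Fin n))).sigma
        fun E => partOnFin Eᶜ (a - c)).card := by
    apply Finset.card_bij'
      (i := fun x _ => ⟨x.2.biUnion id, x.1 \ x.2⟩)
      (j := fun y _ => ⟨y.2 ∪ y.1.image (fun x => {x}), y.1.image (fun x => {x})⟩)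
    case hi =>
      rintro ⟨P, T⟩ hx
      rw [Finset.mem_sigma] at hx
      obtain ⟨hPmem, hT⟩ := hx
      rw [Finset.mem_powersetCard] at hT
      obtain ⟨hTsub, hTcard⟩ := hT
      rw [mem_partFin] at hPmem
      obtain ⟨hPcard, hPsize, hPcover⟩ := hPmem
      have hTP : T ⊆ P := hTsub.trans (Finset.filter_subset _ _)
      have hTsing : ∀ B ∈ T, B.card = 1 := fun B hB => (Finset.mem_filter.mp (hTsub hB)).2
      have hEcard : (T.biUnion id).card = c := by
        have hdis : ∀ B ∈ T, ∀ B' ∈ T, B ≠ B' → Disjoint (id B) (id B') :=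
          fun B hB B' hB' hne => partSetK_disjoint hPcover (hTP hB) (hTP hB') hne
        rw [Finset.card_biUnion hdis]
        simp only [id_eq]
        rw [Finset.sum_congr rfl fun B hB => hTsing B hB]
        simp [hTcard]
      rw [Finset.mem_sigma]
      refine ⟨Finset.mem_powersetCard_univ.mpr hEcard, mem_partOnFin.mpr ⟨?_, ?_, ?_, ?_⟩⟩
      · rw [Finset.card_sdiff_of_subset hTP, hPcard, hTcard]
      · exact fun B hB => hPsize B (Finset.mem_sdiff.mp hB).1
      · intro B hB x hxB
        rw [Finset.mem_compl]
        intro hxE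
        obtain ⟨B', hB'T, hxB'⟩ := Finset.mem_biUnion.mp hxE
        obtain ⟨hBP, hBT⟩ := Finset.mem_sdiff.mp hB
        have hne : B ≠ B' := fun h => hBT (h ▸ hB'T)
        exact Finset.disjoint_left.mp
          (partSetK_disjoint hPcover hBP (hTP hB'T) hne) hxB hxB'
      · intro x hx
        obtain ⟨B, ⟨hBP, hxB⟩, hu⟩ := hPcover x
        have hBT : B ∉ T := fun hBT =>
          (Finset.mem_compl.mp hx) (Finset.mem_biUnion.mpr ⟨B, hBT, hxB⟩)
        refine ⟨B, ⟨Finset.mem_sdiff.mpr ⟨hBP, hBT⟩, hxB⟩, ?_⟩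
        rintro C ⟨hC, hxC⟩
        exact hu C ⟨(Finset.mem_sdiff.mp hC).1, hxC⟩
    case hj =>
      rintro ⟨E, Q⟩ hy
      rw [Finset.mem_sigma] at hy
      obtain ⟨hE, hQ⟩ := hy
      have hEcard : E.card = c := Finset.mem_powersetCard_univ.mp hE
      obtain ⟨hQcard, hQsize, hQsub, hQcover⟩ := mem_partOnFin.mp hQ
      have hTcard : (E.image fun x => ({x} : Finset (Fin n))).card = c := by
        rw [Finset.card_image_of_injective _ Finset.singleton_injective, hEcard]
      have hdisjQT : Disjoint Q (E.image fun x => ({x} : Finset (Fin n))) := by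
        rw [Finset.disjoint_right]
        rintro B hBT hBQ
        obtain ⟨x, hxE, rfl⟩ := Finset.mem_image.mp hBT
        exact (Finset.mem_compl.mp (hQsub _ hBQ (Finset.mem_singleton_self x))) hxE
      rw [Finset.mem_sigma]
      constructor
      · rw [mem_partFin]
        refine ⟨?_, ?_, ?_⟩
        · rw [Finset.card_union_of_disjoint hdisjQT, hQcard, hTcard]
          omega
        · intro B hB
          rcases Finset.mem_union.mp hB with hBQ | hBT
          · exact hQsize B hBQ
          · obtain ⟨x, -, rfl⟩ := Finset.mem_image.mp hBT
            simp
        · intro x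
          by_cases hxE : x ∈ E
          · refine ⟨{x}, ⟨Finset.mem_union_right _ (Finset.mem_image_of_mem _ hxE),
              Finset.mem_singleton_self x⟩, ?_⟩
            rintro C ⟨hC, hxC⟩
            rcases Finset.mem_union.mp hC with hCQ | hCT
            · exact absurd hxE (Finset.mem_compl.mp (hQsub C hCQ hxC))
            · obtain ⟨y, -, rfl⟩ := Finset.mem_image.mp hCT
              rw [Finset.mem_singleton.mp hxC]
          · obtain ⟨B, ⟨hBQ, hxB⟩, hu⟩ := hQcover x (Finset.mem_compl.mpr hxE)
            refine ⟨B, ⟨Finset.mem_union_left _ hBQ, hxB⟩, ?_⟩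
            rintro C ⟨hC, hxC⟩
            rcases Finset.mem_union.mp hC with hCQ | hCT
            · exact hu C ⟨hCQ, hxC⟩
            · obtain ⟨y, hyE, rfl⟩ := Finset.mem_image.mp hCT
              exact absurd ((Finset.mem_singleton.mp hxC) ▸ hyE) hxE
      · rw [Finset.mem_powersetCard]
        refine ⟨?_, hTcard⟩
        intro B hB
        rw [Finset.mem_filter]
        refine ⟨Finset.mem_union_right _ hB, ?_⟩
        obtain ⟨x, -, rfl⟩ := Finset.mem_image.mp hB
        simp
    case left_inv =>
      rintro ⟨P, T⟩ hx
      rw [Finset.mem_sigma] at hx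
      obtain ⟨hPmem, hT⟩ := hx
      rw [Finset.mem_powersetCard] at hT
      obtain ⟨hTsub, hTcard⟩ := hT
      have hTP : T ⊆ P := hTsub.trans (Finset.filter_subset _ _)
      have hTsing : ∀ B ∈ T, B.card = 1 := fun B hB => (Finset.mem_filter.mp (hTsub hB)).2
      have himg : (T.biUnion id).image (fun x => ({x} : Finset (Fin n))) = T := by
        ext B
        simp only [Finset.mem_image, Finset.mem_biUnion, id]
        constructor
        · rintro ⟨x, ⟨B', hB', hxB'⟩, rfl⟩
          obtain ⟨y, hy⟩ := Finset.card_eq_one.mp (hTsing B' hB')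
          have hxy : x = y := Finset.mem_singleton.mp (hy ▸ hxB')
          rw [hxy, ← hy]
          exact hB'
        · intro hBT
          obtain ⟨y, hy⟩ := Finset.card_eq_one.mp (hTsing B hBT)
          exact ⟨y, ⟨B, hBT, by rw [hy]; exact Finset.mem_singleton_self y⟩, hy.symm⟩
      dsimp only
      rw [himg, Finset.sdiff_union_of_subset hTP]
    case right_inv =>
      rintro ⟨E, Q⟩ hy
      rw [Finset.mem_sigma] at hy
      obtain ⟨hE, hQ⟩ := hy
      obtain ⟨-, -, hQsub, -⟩ := mem_partOnFin.mp hQ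
      have hdisjQT : Disjoint Q (E.image fun x => ({x} : Finset (Fin n))) := by
        rw [Finset.disjoint_right]
        rintro B hBT hBQ
        obtain ⟨x, hxE, rfl⟩ := Finset.mem_image.mp hBT
        exact (Finset.mem_compl.mp (hQsub _ hBQ (Finset.mem_singleton_self x))) hxE
      have h1 : (E.image fun x => ({x} : Finset (Fin n))).biUnion id = E := by
        ext x
        simp [Finset.mem_biUnion]
      have h2 : ((Q ∪ E.image fun x => ({x} : Finset (Fin n))) \ (E.image fun x => ({x} : Finset (Fin n)))) = Q :=
        Finset.union_sdiff_cancel_right hdisjQT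
      dsimp only
      rw [h1, h2]
  calc ∑ P ∈ partFin n a, ((P.filter fun B => B.card = 1).powersetCard c).card
      = ((partFin n a).sigma fun P => (P.filter fun B => B.card = 1).powersetCard c).card :=
        (Finset.card_sigma _ _).symm
    _ = ((Finset.univ.powersetCard c : Finset (Finset (Fin n))).sigma
        fun E => partOnFin Eᶜ (a - c)).card := hbij
    _ = ∑ E ∈ Finset.univ.powersetCard c, (partOnFin Eᶜ (a - c)).card :=
        Finset.card_sigma _ _
    _ = ∑ _E ∈ (Finset.univ.powersetCard c : Finset (Finset (Fin n))), S (n - c) (a - c) := by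
        refine Finset.sum_congr rfl fun E hE => ?_
        rw [card_partOnFin, Finset.card_compl, Fintype.card_fin,
          Finset.mem_powersetCard_univ.mp hE]
    _ = n.choose c * S (n - c) (a - c) := by
        rw [Finset.sum_const, Finset.card_powersetCard, Finset.card_univ,
          Fintype.card_fin, smul_eq_mul]


/-- For all `0 ≤ a ≤ n`,
`S2 n a = ∑_{c=0}^{a} (-1)^c * C(n,c) * S (n-c) (a-c)`. -/
theorem S2_eq_alternating_sum_S (n a : ℕ) (h : a ≤ n) :
    (S2 n a : ℤ) =
      ∑ c ∈ Finset.range (a + 1), (-1 : ℤ) ^ c * (n.choose c : ℤ) * (S (n - c) (a - c) : ℤ) := by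
  classical
  have h1 : ∀ c ∈ Finset.range (a + 1),
      (-1 : ℤ) ^ c * (n.choose c : ℤ) * (S (n - c) (a - c) : ℤ)
        = ∑ P ∈ partFin n a,
            (-1 : ℤ) ^ c * (((P.filter fun B => B.card = 1).card.choose c : ℕ) : ℤ) := by
    intro c hc
    have hcp := count_pairs n a c (Nat.lt_succ_iff.mp (Finset.mem_range.mp hc))
    have hch : ∑ P ∈ partFin n a, ((P.filter fun B => B.card = 1).powersetCard c).card
        = ∑ P ∈ partFin n a, (P.filter fun B => B.card = 1).card.choose c :=
      Finset.sum_congr rfl fun P _ => Finset.card_powersetCard _ _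
    rw [hch] at hcp
    rw [← Finset.mul_sum, mul_assoc]
    congr 1
    exact_mod_cast hcp.symm
  have h2 : ∀ P ∈ partFin n a,
      ∑ c ∈ Finset.range (a + 1),
          (-1 : ℤ) ^ c * (((P.filter fun B => B.card = 1).card.choose c : ℕ) : ℤ)
        = if (P.filter fun B => B.card = 1).card = 0 then 1 else 0 := by
    intro P hP
    have hka : (P.filter fun B => B.card = 1).card ≤ a := by
      have h1 := Finset.card_filter_le P (fun B => B.card = 1)
      have h2 := (mem_partFin.mp hP).1
      omega
    rw [← Int.alternating_sum_range_choose (n := (P.filter fun B => B.card = 1).card)]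
    refine (Finset.sum_subset (Finset.range_subset_range.mpr (by omega)) ?_).symm
    intro c hc hnc
    rw [Finset.mem_range] at hc hnc
    rw [Nat.choose_eq_zero_of_lt (by omega)]
    simp
  have h3 : ((partFin n a).filter fun P => (P.filter fun B => B.card = 1).card = 0)
      = (Set.toFinite (partSetK (Fin n) 2 a)).toFinset := by
    ext P
    simp only [Finset.mem_filter, mem_partFin, Set.Finite.mem_toFinset]
    constructor
    · rintro ⟨⟨hcard, hsize, hcover⟩, hzero⟩
      refine ⟨hcard, ?_, hcover⟩
      intro B hB
      have hb1 := hsize B hB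
      have hne1 : ¬(B.card = 1) := by
        intro hB1
        have hmem : B ∈ P.filter fun B => B.card = 1 := Finset.mem_filter.mpr ⟨hB, hB1⟩
        rw [Finset.card_eq_zero] at hzero
        simp [hzero] at hmem
      omega
    · rintro ⟨hcard, hsize, hcover⟩
      refine ⟨⟨hcard, fun B hB => le_trans (by norm_num) (hsize B hB), hcover⟩, ?_⟩
      rw [Finset.card_eq_zero, Finset.filter_eq_empty_iff]
      intro B hB
      have := hsize B hB
      omega
  have hS2 : (S2 n a)
      = ((partFin n a).filter fun P => (P.filter fun B => B.card = 1).card = 0).card := by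
    rw [S2_eq_ncard, Set.ncard_eq_toFinset_card _ (Set.toFinite _), h3]
  rw [hS2, Finset.sum_congr rfl h1, Finset.sum_comm, Finset.sum_congr rfl h2,
    Finset.sum_boole]
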